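/- Let d ≥ 2 be a natural number, let ν = √((1 + 1/√d)/2), and let ε be a real with 0 ≤ ε ≤ (1/2)(1 − 1/√d). Define vectors in ℂ^d by: ψ_B(0) = ν and ψ_B(k) = √((1 − ν²)/(d−1)) for k ≠ 0; φ(0) = √(1−ε) and φ(k) = √(ε/(d−1)) for k ≠ 0. Let F be the d×d Fourier matrix with entries F_{j,k} = e^{2πi·jk/d}/√d. Then |⟨φ, ψ_B⟩|² + |⟨F φ, ψ_B⟩|² = 1 + 1/√d + (2/√d)·( √(ε(1−ε)(d−1)) − ε ). -/

import Mathlib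

lemma key_real (D s m a b u w0 c w' ε M : ℝ)
    (ha : a^2 = 1-ε) (hb : b^2 = ε) (hu : u^2 = (1+s)/2) (hw : w0^2 = (1-s)/2)
    (hm : m^2 = D-1) (hs : s^2*D = 1) (huw : u*w0 = m*s/2)
    (hc : m*c = b) (hw4 : m*w' = w0) (hM : M = m*a*b) :
    (a*u + (D-1)*(c*w'))^2 + ((a+(D-1)*c)*s*u + (D-1)*((a-c)*s*w'))^2
      = 1 + s + 2*s*(M - ε) := by
  have h3 : (D-1)*c = m*b := by linear_combination (-c)*hm + m*hc
  have h4 : (D-1)*w' = m*w0 := by linear_combination (-w')*hm + m*hw4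
  have hbw : (D-1)*(c*w') = b*w0 := by
    linear_combination (-(c*w'))*hm + (m*w')*hc + b*hw4
  have hr2 : (a+(D-1)*c)*s*u + (D-1)*((a-c)*s*w')
      = s*(u*(a+m*b)+w0*(m*a-b)) := by
    linear_combination s*u*h3 + s*(a-c)*h4 + (-(s*w0))*hc
  rw [hbw, hr2]
  have E1 : (a*u+b*w0)^2 = 1/2 + s*(1-2*ε)/2 + s*m*a*b := by
    linear_combination a^2*hu + ((1+s)/2)*ha + b^2*hw + ((1-s)/2)*hb + 2*a*b*huw
  have E2 : (u*(a+m*b)+w0*(m*a-b))^2 = D/2 + s*D*(1-2*ε)/2 + s*D*m*a*b := by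
    linear_combination ((a+m*b)^2)*hu + ((m*a-b)^2)*hw + (2*(a+m*b)*(m*a-b))*huw
      + ((1+m^2)*(1+s)/2)*ha + ((1+m^2)*(1-s)/2)*hb
      + (1/2 + s*(1-2*ε)/2 + m*s*a*b)*hm
  linear_combination E1 + s^2*E2 + (1/2 + s*(1-2*ε)/2 + s*m*a*b)*hs + (-2*s)*hM


lemma sum_ite_val (d : ℕ) (hd : 0 < d) (X Y : ℂ) :
    ∑ k : Fin d, (if (k : ℕ) = 0 then X else Y) = X + ((d:ℂ)-1) * Y := by
  rw [Fin.sum_univ_eq_sum_range (fun i => if i = 0 then X else Y) d]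
  have h : ∀ i ∈ Finset.range d, (if i = 0 then X else Y)
      = Y + (if i = 0 then X - Y else 0) := by
    intro i _; split <;> ring
  rw [Finset.sum_congr rfl h, Finset.sum_add_distrib, Finset.sum_const,
    Finset.sum_ite_eq' (Finset.range d) 0 (fun _ => X - Y),
    if_pos (Finset.mem_range.mpr hd)]
  simp only [Finset.card_range, nsmul_eq_mul]
  ring

lemma exp_sum (d : ℕ) (hd : 2 ≤ d) (j : Fin d) :
    ∑ k : Fin d, Complex.exp (2 * Real.pi * Complex.I * (j:ℕ) * (k:ℕ) / d)
      = if (j:ℕ) = 0 then (d:ℂ) else 0 := by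
  have hd0 : (d:ℂ) ≠ 0 := Nat.cast_ne_zero.mpr (by omega)
  by_cases hj : (j:ℕ) = 0
  · simp [hj]
  · set ω := Complex.exp (2*Real.pi*Complex.I*(j:ℕ)/d) with hω
    have hterm : ∀ k : Fin d,
        Complex.exp (2*Real.pi*Complex.I*(j:ℕ)*(k:ℕ)/d) = ω ^ (k:ℕ) := by
      intro k
      rw [hω, ← Complex.exp_nat_mul]
      congr 1; field_simp
    rw [Finset.sum_congr rfl (fun k _ => hterm k),
      Fin.sum_univ_eq_sum_range (fun i => ω ^ i) d]
    have h2πI : (2*(Real.pi:ℂ)*Complex.I) ≠ 0 := by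
      simp [Real.pi_ne_zero, Complex.I_ne_zero]
    have hωd : ω ^ d = 1 := by
      rw [hω, ← Complex.exp_nat_mul]
      have harg : (d:ℂ) * (2*Real.pi*Complex.I*(j:ℕ)/d)
          = ((j:ℕ):ℤ) * (2*Real.pi*Complex.I) := by
        push_cast; field_simp
      rw [harg, Complex.exp_int_mul_two_pi_mul_I]
    have hω1 : ω ≠ 1 := by
      intro h
      rw [hω, Complex.exp_eq_one_iff] at h
      obtain ⟨n, hn⟩ := h
      have h2 : ((j:ℕ):ℂ) = n * d := by
        field_simp at hn
        apply mul_left_cancel₀ h2πI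
        linear_combination (2*(Real.pi:ℂ)*Complex.I) * hn
      have h3 : ((j:ℕ):ℤ) = n * d := by exact_mod_cast h2
      have hjd : ((j:ℕ):ℤ) < d := by exact_mod_cast j.isLt
      have hj0 : 0 < ((j:ℕ):ℤ) := by exact_mod_cast Nat.pos_of_ne_zero hj
      have hdz : (0:ℤ) < d := by exact_mod_cast (by omega : 0 < d)
      rcases le_or_gt n 0 with h | h
      · nlinarith
      · nlinarith
    rw [geom_sum_eq hω1 d, hωd]
    simp [hj]


open Matrix

/-- Value of the two-MUB steering functional for the explicit unsteerable model
with ε-imprecise computational- and Fourier-basis measurements: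
`|⟨φ,ψ_B⟩|² + |⟨Fφ,ψ_B⟩|² = 1 + 1/√d + (2/√d)(√(ε(1−ε)(d−1)) − ε)`. -/
theorem two_mub_imprecise_model_value
    (d : ℕ) (hd : 2 ≤ d) (ε : ℝ) (hε0 : 0 ≤ ε)
    (hε1 : ε ≤ (1 / 2) * (1 - 1 / Real.sqrt d))
    (ν : ℝ) (hν : ν = Real.sqrt ((1 + 1 / Real.sqrt d) / 2))
    (ψB φv : Fin d → ℂ)
    (hψB : ∀ k : Fin d, ψB k =
      if (k : ℕ) = 0 then (ν : ℂ)
      else ((Real.sqrt ((1 - ν ^ 2) / ((d : ℝ) - 1)) : ℝ) : ℂ))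
    (hφ : ∀ k : Fin d, φv k =
      if (k : ℕ) = 0 then ((Real.sqrt (1 - ε) : ℝ) : ℂ)
      else ((Real.sqrt (ε / ((d : ℝ) - 1)) : ℝ) : ℂ))
    (F : Matrix (Fin d) (Fin d) ℂ)
    (hF : ∀ j k : Fin d, F j k =
      Complex.exp (2 * Real.pi * Complex.I * (j : ℕ) * (k : ℕ) / d) / (Real.sqrt d : ℂ)) :
    ‖star φv ⬝ᵥ ψB‖ ^ 2 + ‖star (F *ᵥ φv) ⬝ᵥ ψB‖ ^ 2 =
      1 + 1 / Real.sqrt d +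
        (2 / Real.sqrt d) * (Real.sqrt (ε * (1 - ε) * ((d : ℝ) - 1)) - ε) := by
  haveI : NeZero d := ⟨by omega⟩
  have hd0 : 0 < d := by omega
  have hdR : (2:ℝ) ≤ (d:ℝ) := by exact_mod_cast hd
  set sd := Real.sqrt d with hsd_def
  have hsd1 : 1 ≤ sd := by
    rw [hsd_def, show (1:ℝ) = Real.sqrt 1 by simp]
    exact Real.sqrt_le_sqrt (by linarith)
  have hsd0 : 0 < sd := lt_of_lt_of_le one_pos hsd1
  have hsdsq : sd^2 = d := Real.sq_sqrt (by positivity)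
  have hinv : 1/sd ≤ 1 := by
    rw [div_le_one hsd0]; exact hsd1
  have hinv0 : 0 ≤ 1/sd := by positivity
  have hε_le1 : ε ≤ 1 := by nlinarith
  set a := Real.sqrt (1-ε) with ha_def
  set b := Real.sqrt ε with hb_def
  set m := Real.sqrt ((d:ℝ)-1) with hm_def
  set w0 := Real.sqrt ((1 - 1/sd)/2) with hw0_def
  set c := Real.sqrt (ε/((d:ℝ)-1)) with hc_def
  set w' := Real.sqrt ((1-ν^2)/((d:ℝ)-1)) with hw'_def
  set M := Real.sqrt (ε*(1-ε)*((d:ℝ)-1)) with hM_def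
  have ha : a^2 = 1-ε := Real.sq_sqrt (by linarith)
  have hb : b^2 = ε := Real.sq_sqrt hε0
  have hm : m^2 = (d:ℝ)-1 := Real.sq_sqrt (by linarith)
  have hm0 : 0 < m := by
    rw [hm_def]; apply Real.sqrt_pos.mpr; linarith
  have hu : ν^2 = (1+1/sd)/2 := by
    rw [hν]; exact Real.sq_sqrt (by positivity)
  have hν0 : 0 ≤ ν := by rw [hν]; exact Real.sqrt_nonneg _
  have hw : w0^2 = (1-1/sd)/2 := Real.sq_sqrt (by linarith)
  have hd1 : ((d:ℝ)-1) ≠ 0 := ne_of_gt (by linarith)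
  have hs : (1/sd)^2 * d = 1 := by
    have hsd0' : sd ≠ 0 := ne_of_gt hsd0
    field_simp
    linarith [hsdsq]
  have sq_inj : ∀ x y : ℝ, 0 ≤ x → 0 ≤ y → x^2 = y^2 → x = y := by
    intro x y hx hy h
    rw [← Real.sqrt_sq hx, h, Real.sqrt_sq hy]
  have ha0 : 0 ≤ a := ha_def ▸ Real.sqrt_nonneg _
  have hb0 : 0 ≤ b := hb_def ▸ Real.sqrt_nonneg _
  have hm0' : 0 ≤ m := hm_def ▸ Real.sqrt_nonneg _
  have hw00 : 0 ≤ w0 := hw0_def ▸ Real.sqrt_nonneg _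
  have hc0 : 0 ≤ c := hc_def ▸ Real.sqrt_nonneg _
  have hw'0 : 0 ≤ w' := hw'_def ▸ Real.sqrt_nonneg _
  have huw : ν * w0 = m * (1/sd) / 2 := by
    apply sq_inj _ _ (mul_nonneg hν0 hw00) (by positivity)
    linear_combination w0^2*hu + ((1+1/sd)/2)*hw + (-(1/sd)^2/4)*hm + (-1/4)*hs
  have hc2 : c^2 * ((d:ℝ)-1) = ε := by
    rw [hc_def, Real.sq_sqrt (div_nonneg hε0 (by linarith)), div_mul_cancel₀ _ hd1]
  have hc : m * c = b := by
    apply sq_inj _ _ (mul_nonneg hm0' hc0) hb0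
    linear_combination c^2*hm + hc2 + (-1)*hb
  have hν2le : 1 - ν^2 ≥ 0 := by rw [hu]; linarith
  have hw2' : w'^2 * ((d:ℝ)-1) = 1 - ν^2 := by
    rw [hw'_def, Real.sq_sqrt (div_nonneg (by linarith) (by linarith)),
      div_mul_cancel₀ _ hd1]
  have hw4 : m * w' = w0 := by
    apply sq_inj _ _ (mul_nonneg hm0' hw'0) hw00
    linear_combination w'^2*hm + hw2' + (-1)*hu + (-1)*hw
  have hMsq : M^2 = ε*(1-ε)*((d:ℝ)-1) := by
    rw [hM_def]
    exact Real.sq_sqrt (mul_nonneg (mul_nonneg hε0 (by linarith)) (by linarith))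
  have hM : M = m*a*b := by
    apply sq_inj _ _ (hM_def ▸ Real.sqrt_nonneg _) (mul_nonneg (mul_nonneg hm0' ha0) hb0)
    linear_combination hMsq + (-(a^2*b^2))*hm + (-(((d:ℝ)-1)*b^2))*ha
      + (-(((d:ℝ)-1)*(1-ε)))*hb
  -- the first inner product
  have hdot1 : star φv ⬝ᵥ ψB = ((a*ν + ((d:ℝ)-1)*(c*w') : ℝ) : ℂ) := by
    have hterm : ∀ k : Fin d, (star φv) k * ψB k
        = if (k : ℕ) = 0 then ((a*ν : ℝ):ℂ) else ((c*w' : ℝ):ℂ) := by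
      intro k
      simp only [Pi.star_apply, hφ k, hψB k]
      split
      · simp only [Complex.star_def, Complex.conj_ofReal]; push_cast; ring
      · simp only [Complex.star_def, Complex.conj_ofReal]; push_cast; ring
    rw [dotProduct, Finset.sum_congr rfl (fun k _ => hterm k),
      sum_ite_val d hd0]
    push_cast
    ring
  -- entries of F *ᵥ φv
  have hFv : ∀ j : Fin d, (F *ᵥ φv) j
      = if (j : ℕ) = 0 then (((a + ((d:ℝ)-1)*c)/sd : ℝ):ℂ)
        else (((a-c)/sd : ℝ):ℂ) := by
    intro j
    have hterm : ∀ k : Fin d, F j k * φv k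
        = ((c:ℝ):ℂ)/(sd:ℂ) * Complex.exp (2*Real.pi*Complex.I*(j:ℕ)*(k:ℕ)/d)
          + (if k = (0 : Fin d) then (((a:ℝ):ℂ) - ((c:ℝ):ℂ))/(sd:ℂ) else 0) := by
      intro k
      rw [hF j k, hφ k]
      rcases eq_or_ne k 0 with hk | hk
      · subst hk
        simp only [Fin.val_zero, if_pos rfl]
        norm_num
        ring
      · have hk' : (k:ℕ) ≠ 0 := fun h => hk (Fin.ext (by simpa using h))
        rw [if_neg hk', if_neg hk]
        ring
    rw [Matrix.mulVec, dotProduct, Finset.sum_congr rfl (fun k _ => hterm k),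
      Finset.sum_add_distrib, ← Finset.mul_sum, exp_sum d hd j,
      Finset.sum_ite_eq' Finset.univ (0 : Fin d)
        (fun _ => (((a:ℝ):ℂ) - ((c:ℝ):ℂ))/(sd:ℂ)), if_pos (Finset.mem_univ _)]
    have hsdC : ((sd:ℝ):ℂ) ≠ 0 := by
      exact_mod_cast ne_of_gt hsd0
    split
    · push_cast
      field_simp
      ring
    · push_cast
      field_simp
      ring
  -- the second inner product
  have hdot2 : star (F *ᵥ φv) ⬝ᵥ ψB
      = ((((a + ((d:ℝ)-1)*c)/sd)*ν + ((d:ℝ)-1)*(((a-c)/sd)*w') : ℝ):ℂ) := by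
    have hterm : ∀ k : Fin d, (star (F *ᵥ φv)) k * ψB k
        = if (k : ℕ) = 0 then ((((a + ((d:ℝ)-1)*c)/sd)*ν : ℝ):ℂ)
          else ((((a-c)/sd)*w' : ℝ):ℂ) := by
      intro k
      simp only [Pi.star_apply, hFv k, hψB k]
      split
      · simp only [Complex.star_def, Complex.conj_ofReal]; push_cast; ring
      · simp only [Complex.star_def, Complex.conj_ofReal]; push_cast; ring
    rw [dotProduct, Finset.sum_congr rfl (fun k _ => hterm k),
      sum_ite_val d hd0]
    push_cast
    ring
  rw [hdot1, hdot2, Complex.norm_real, Complex.norm_real, Real.norm_eq_abs, Real.norm_eq_abs, sq_abs, sq_abs]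
  linear_combination key_real (d:ℝ) (1/sd) m a b ν w0 c w' ε M
    ha hb hu hw hm hs huw hc hw4 hM
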